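/- (Wedin sin-θ bound, correctly specified rank) Let A be a rank-r matrix, E a perturbation, and let Ã = Ũ Σ̃ Ṽ^T be the rank-r truncated SVD of X = A + E. Then the sine of the largest principal angle between row(A) and row(Ã) satisfies sin θ_r ≤ min( max(‖E Ṽ‖, ‖E^T Ũ‖) / σ_min(Ã), 1 ), where σ_min(Ã) is the r-th (smallest nonzero) singular value of Ã. -/

import Mathlib

open Matrix

/-- View a plain vector as an element of Euclidean space. -/
noncomputable def toEuc {n : ℕ} (v : Fin n → ℝ) : EuclideanSpace ℝ (Fin n) := WithLp.toLp 2 v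

/-- The row space of a matrix, as a subspace of Euclidean space `ℝ^n`. -/
noncomputable def rowSpace {m : Type*} {n : ℕ} (A : Matrix m (Fin n) ℝ) :
    Submodule ℝ (EuclideanSpace ℝ (Fin n)) :=
  Submodule.span ℝ (Set.range fun i => toEuc (A i))

/-- The orthogonal projection matrix onto a subspace of `ℝ^n`. -/
noncomputable def projMat {n : ℕ} (U : Submodule ℝ (EuclideanSpace ℝ (Fin n))) :
    Matrix (Fin n) (Fin n) ℝ :=
  Matrix.toEuclideanLin.symm (U.subtype ∘ₗ (U.orthogonalProjectionOnto).toLinearMap)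

/-- The operator (spectral) norm of a matrix. -/
noncomputable def opNorm {m : Type*} [Fintype m] {n : ℕ} (A : Matrix m (Fin n) ℝ) : ℝ :=
  ‖(Matrix.toEuclideanLin A).toContinuousLinearMap‖

theorem Matrix.isHermitian_transpose_mul_self {m : Type*} [Fintype m] {n : ℕ}
    (A : Matrix m (Fin n) ℝ) : (Aᵀ * A).IsHermitian := by
  simpa [Matrix.conjTranspose_eq_transpose_of_trivial] using
    Matrix.isHermitian_conjTranspose_mul_self A

/-- Singular values of a matrix, in ascending order. -/
noncomputable def svalAsc {m : Type*} [Fintype m] {n : ℕ} (A : Matrix m (Fin n) ℝ) :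
    Fin n → ℝ := fun i =>
  Real.sqrt ((Matrix.isHermitian_transpose_mul_self A).eigenvalues
    (Tuple.sort (Matrix.isHermitian_transpose_mul_self A).eigenvalues i))

/-- Singular values of a matrix, in descending order (`svalDesc A 0` is the largest). -/
noncomputable def svalDesc {m : Type*} [Fintype m] {n : ℕ} (A : Matrix m (Fin n) ℝ)
    (i : Fin n) : ℝ :=
  svalAsc A i.rev

/- ### Auxiliary lemmas -/

section Aux

local notation "⟪" x ", " y "⟫" => @inner ℝ _ _ x y

lemma le_of_sq_le_sq' {a b : ℝ} (ha : 0 ≤ a) (hb : 0 ≤ b) (h : a ^ 2 ≤ b ^ 2) : a ≤ b := by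
  have := Real.sqrt_le_sqrt h
  rwa [Real.sqrt_sq ha, Real.sqrt_sq hb] at this

variable {E : Type*} [NormedAddCommGroup E] [InnerProductSpace ℝ E] [FiniteDimensional ℝ E]

lemma pyth (K : Submodule ℝ E) (x : E) :
    ‖x - (Submodule.orthogonalProjectionOnto K x : E)‖ ^ 2 + ‖(Submodule.orthogonalProjectionOnto K x : E)‖ ^ 2 = ‖x‖ ^ 2 := by
  have h : ⟪x - (Submodule.orthogonalProjectionOnto K x : E), (Submodule.orthogonalProjectionOnto K x : E)⟫ = 0 :=
    Submodule.starProjection_inner_eq_zero (K := K) x _ (Submodule.orthogonalProjectionOnto K x).2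
  have := norm_add_sq_real (x - (Submodule.orthogonalProjectionOnto K x : E)) (Submodule.orthogonalProjectionOnto K x : E)
  simp only [sub_add_cancel, h] at this
  linarith

lemma sub_proj_norm_le (K : Submodule ℝ E) (x : E) :
    ‖x - (Submodule.orthogonalProjectionOnto K x : E)‖ ≤ ‖x‖ := by
  refine le_of_sq_le_sq' (norm_nonneg _) (norm_nonneg _) ?_
  have := pyth K x
  nlinarith [norm_nonneg (Submodule.orthogonalProjectionOnto K x : E)]

lemma sin_swap (V W : Submodule ℝ E)
    (hdim : Module.finrank ℝ V = Module.finrank ℝ W) (R : ℝ) (hR : 0 ≤ R) (hR1 : R < 1)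
    (h : ∀ y ∈ V, ‖y - (Submodule.orthogonalProjectionOnto W y : E)‖ ≤ R * ‖y‖) :
    ∀ x ∈ W, ‖x - (Submodule.orthogonalProjectionOnto V x : E)‖ ≤ R * ‖x‖ := by
  intro x hx
  have hc2 : (0:ℝ) < 1 - R ^ 2 := by nlinarith
  set c : ℝ := Real.sqrt (1 - R ^ 2) with hc
  have hcpos : 0 < c := Real.sqrt_pos.2 hc2
  have hcsq : c ^ 2 = 1 - R ^ 2 := Real.sq_sqrt hc2.le
  have step1 : ∀ y ∈ V, c * ‖y‖ ≤ ‖(Submodule.orthogonalProjectionOnto W y : E)‖ := by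
    intro y hy
    have h1 := pyth W y
    have h2 := h y hy
    have h3 : ‖y - (Submodule.orthogonalProjectionOnto W y : E)‖ ^ 2 ≤ (R * ‖y‖)^2 := by
      have := norm_nonneg (y - (Submodule.orthogonalProjectionOnto W y : E))
      nlinarith
    refine le_of_sq_le_sq' (mul_nonneg hcpos.le (norm_nonneg y)) (norm_nonneg _) ?_
    nlinarith [norm_nonneg y]
  let f : V →ₗ[ℝ] W := (Submodule.orthogonalProjectionOnto W).toLinearMap.comp V.subtype
  have hinj : Function.Injective f := by
    rw [← LinearMap.ker_eq_bot, LinearMap.ker_eq_bot']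
    intro y hy0
    have h5 : c * ‖(y : E)‖ ≤ ‖((f y : W) : E)‖ := step1 y y.2
    rw [hy0] at h5
    simp only [ZeroMemClass.coe_zero, norm_zero] at h5
    have : ‖(y : E)‖ = 0 := le_antisymm (by nlinarith [norm_nonneg (y : E)]) (norm_nonneg _)
    exact Subtype.ext (norm_eq_zero.1 this)
  have hsurj : Function.Surjective f := by
    have h1 : Module.finrank ℝ (LinearMap.range f) = Module.finrank ℝ W := by
      rw [LinearMap.finrank_range_of_inj hinj, hdim]
    rw [← LinearMap.range_eq_top]
    exact Submodule.eq_top_of_finrank_eq h1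
  obtain ⟨y, hy⟩ := hsurj ⟨x, hx⟩
  have hPy : (Submodule.orthogonalProjectionOnto W (y : E) : E) = x := congrArg Subtype.val hy
  have hxy : ⟪x, (y : E)⟫ = ‖x‖ ^ 2 := by
    have hperp : ⟪x, (y : E) - (Submodule.orthogonalProjectionOnto W (y:E) : E)⟫ = 0 :=
      (Submodule.sub_starProjection_mem_orthogonal (K := W) (y : E)) x hx
    calc ⟪x, (y : E)⟫ = ⟪x, (y:E) - (Submodule.orthogonalProjectionOnto W (y:E) : E)⟫ +
          ⟪x, (Submodule.orthogonalProjectionOnto W (y:E) : E)⟫ := by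
            rw [← inner_add_right, sub_add_cancel]
      _ = ‖x‖ ^ 2 := by rw [hperp, hPy, zero_add, real_inner_self_eq_norm_sq]
  have hyb : c * ‖(y : E)‖ ≤ ‖x‖ := by
    have := step1 y y.2; rw [hPy] at this; exact this
  have hswap : ⟪x, (y : E)⟫ = ⟪(Submodule.orthogonalProjectionOnto V x : E), (y : E)⟫ := by
    have : ⟪x - (Submodule.orthogonalProjectionOnto V x : E), (y : E)⟫ = 0 :=
      Submodule.starProjection_inner_eq_zero (K := V) x (y : E) y.2
    rw [inner_sub_left] at this; linarith
  have hPV : c * ‖x‖ ≤ ‖(Submodule.orthogonalProjectionOnto V x : E)‖ := by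
    rcases eq_or_lt_of_le (norm_nonneg x) with h0 | h0
    · rw [← h0, mul_zero]; exact norm_nonneg _
    · have hCS : ⟪(Submodule.orthogonalProjectionOnto V x : E), (y : E)⟫ ≤
          ‖(Submodule.orthogonalProjectionOnto V x : E)‖ * ‖(y : E)‖ := real_inner_le_norm _ _
      have hA : ‖x‖ ^ 2 ≤ ‖(Submodule.orthogonalProjectionOnto V x : E)‖ * ‖(y : E)‖ := by
        rw [← hxy, hswap]; exact hCS
      have hB := mul_le_mul_of_nonneg_left hyb (norm_nonneg (Submodule.orthogonalProjectionOnto V x : E))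
      have hAc := mul_le_mul_of_nonneg_left hA hcpos.le
      have : c * ‖x‖ ^ 2 ≤ ‖(Submodule.orthogonalProjectionOnto V x : E)‖ * ‖x‖ := by nlinarith
      nlinarith
  have h1 := pyth V x
  have hPV2 : (c * ‖x‖) ^ 2 ≤ ‖(Submodule.orthogonalProjectionOnto V x : E)‖ ^ 2 :=
    pow_le_pow_left₀ (mul_nonneg hcpos.le (norm_nonneg x)) hPV 2
  have hsq : ‖x - (Submodule.orthogonalProjectionOnto V x : E)‖ ^ 2 ≤ (R * ‖x‖) ^ 2 := by
    nlinarith [norm_nonneg x]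
  exact le_of_sq_le_sq' (norm_nonneg _) (mul_nonneg hR (norm_nonneg x)) hsq

/- ### Matrix bridging lemmas -/

lemma toEuclideanLin_mul {m n k : ℕ} (M : Matrix (Fin m) (Fin n) ℝ) (N : Matrix (Fin n) (Fin k) ℝ) :
    Matrix.toEuclideanLin (M * N) = (Matrix.toEuclideanLin M) ∘ₗ (Matrix.toEuclideanLin N) := by
  apply LinearMap.ext; intro v
  show WithLp.toLp 2 ((M * N) *ᵥ WithLp.ofLp v) = WithLp.toLp 2 (M *ᵥ (N *ᵥ WithLp.ofLp v))
  rw [Matrix.mulVec_mulVec]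

lemma projMat_apply {n : ℕ} (U : Submodule ℝ (EuclideanSpace ℝ (Fin n)))
    (x : EuclideanSpace ℝ (Fin n)) :
    Matrix.toEuclideanLin (projMat U) x = (Submodule.orthogonalProjectionOnto U x : EuclideanSpace ℝ (Fin n)) := by
  rw [projMat, LinearEquiv.apply_symm_apply]; rfl

lemma rowSpace_eq_range {k n : ℕ} (M : Matrix (Fin k) (Fin n) ℝ) :
    rowSpace M = LinearMap.range (Matrix.toEuclideanLin Mᵀ) := by
  have h : Matrix.toEuclideanLin Mᵀ = ((WithLp.linearEquiv 2 ℝ (Fin n → ℝ)).symm.toLinearMap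
      ∘ₗ Mᵀ.mulVecLin) ∘ₗ (WithLp.linearEquiv 2 ℝ (Fin k → ℝ)).toLinearMap := rfl
  rw [rowSpace, h, LinearMap.range_comp_of_range_eq_top _ (LinearEquiv.range _),
    LinearMap.range_comp, Matrix.range_mulVecLin, Submodule.map_span, ← Set.range_comp]
  rfl

lemma matvec_norm_le {m n : ℕ} (M : Matrix (Fin m) (Fin n) ℝ) (v : EuclideanSpace ℝ (Fin n)) :
    ‖Matrix.toEuclideanLin M v‖ ≤ opNorm M * ‖v‖ :=
  (Matrix.toEuclideanLin M).toContinuousLinearMap.le_opNorm v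

lemma euc_norm_sq {k : ℕ} (v : EuclideanSpace ℝ (Fin k)) :
    ‖v‖ ^ 2 = ∑ i, v i ^ 2 := by
  rw [EuclideanSpace.norm_eq, Real.sq_sqrt (Finset.sum_nonneg fun i _ => sq_nonneg _)]
  simp [sq_abs]

lemma diag_inv_bound {r : ℕ} (σ : Fin r → ℝ) (s : ℝ) (hs : 0 < s) (hσ : ∀ i, s ≤ σ i)
    (u : EuclideanSpace ℝ (Fin r)) :
    ‖Matrix.toEuclideanLin (Matrix.diagonal fun i => (σ i)⁻¹) u‖ ≤ s⁻¹ * ‖u‖ := by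
  refine le_of_sq_le_sq' (norm_nonneg _) (mul_nonneg (inv_nonneg.2 hs.le) (norm_nonneg _)) ?_
  have happ : ∀ i, (Matrix.toEuclideanLin (Matrix.diagonal fun i => (σ i)⁻¹) u) i
      = (σ i)⁻¹ * u i := by
    intro i
    show ((Matrix.diagonal fun i => (σ i)⁻¹) *ᵥ WithLp.ofLp u) i = (σ i)⁻¹ * u i
    rw [Matrix.mulVec_diagonal]
  rw [euc_norm_sq, mul_pow, euc_norm_sq, Finset.mul_sum]
  refine Finset.sum_le_sum fun i _ => ?_
  rw [happ i]
  have h1 : (σ i)⁻¹ ≤ s⁻¹ := inv_anti₀ hs (hσ i)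
  have h2 : (0:ℝ) ≤ (σ i)⁻¹ := inv_nonneg.2 ((hs.trans_le (hσ i)).le)
  have h3 : ((σ i)⁻¹) ^ 2 ≤ (s⁻¹) ^ 2 := by nlinarith
  nlinarith [mul_le_mul_of_nonneg_right h3 (sq_nonneg (u i))]

lemma isometry_of_orthonormal {n r : ℕ} (Vt : Matrix (Fin n) (Fin r) ℝ)
    (hVt : Vtᵀ * Vt = 1) (u : EuclideanSpace ℝ (Fin r)) :
    ‖Matrix.toEuclideanLin Vt u‖ = ‖u‖ := by
  have hsq : ‖Matrix.toEuclideanLin Vt u‖ ^ 2 = ‖u‖ ^ 2 := by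
    rw [← real_inner_self_eq_norm_sq, ← real_inner_self_eq_norm_sq]
    show (Vt *ᵥ WithLp.ofLp u) ⬝ᵥ (Vt *ᵥ WithLp.ofLp u) = WithLp.ofLp u ⬝ᵥ WithLp.ofLp u
    have hvm : (Vt *ᵥ WithLp.ofLp u) ᵥ* Vt = Vtᵀ *ᵥ (Vt *ᵥ WithLp.ofLp u) := by
      rw [← Matrix.transpose_transpose Vt, Matrix.vecMul_transpose, Matrix.transpose_transpose]
    rw [Matrix.dotProduct_mulVec, hvm, Matrix.mulVec_mulVec, hVt, Matrix.one_mulVec]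
  exact le_antisymm
    (le_of_sq_le_sq' (norm_nonneg _) (norm_nonneg _) hsq.le)
    (le_of_sq_le_sq' (norm_nonneg _) (norm_nonneg _) hsq.ge)

lemma proj_norm_le (K : Submodule ℝ E) (x : E) :
    ‖(Submodule.orthogonalProjectionOnto K x : E)‖ ≤ ‖x‖ := by
  refine le_of_sq_le_sq' (norm_nonneg _) (norm_nonneg _) ?_
  have := pyth K x
  nlinarith [norm_nonneg (x - (Submodule.orthogonalProjectionOnto K x : E))]

lemma toEuclideanLin_one {n : ℕ} :
    Matrix.toEuclideanLin (1 : Matrix (Fin n) (Fin n) ℝ) = LinearMap.id := by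
  apply LinearMap.ext; intro v
  show WithLp.toLp 2 ((1 : Matrix (Fin n) (Fin n) ℝ) *ᵥ WithLp.ofLp v) = v
  simp

end Aux

set_option maxHeartbeats 1600000 in
/-- Wedin sin-θ bound, correctly specified rank.
`A` has rank `r`, `X = A + E`, and `Ã = Ũ Σ̃ Ṽᵀ` is the rank-`r` truncated SVD of `X`
(`Ũ`, `Ṽ` have `r` orthonormal columns, `Σ̃ = diagonal σd` with positive decreasing
entries which are the top `r` singular values of `X`).  Then the sine of the largest
principal angle between `row A` and `row Ã` is at most
`min (max ‖E Ṽ‖ ‖Eᵀ Ũ‖ / σ_min(Ã)) 1`. -/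
theorem wedin_bound_correct_rank (d n r : ℕ) (hr : 0 < r) (hrn : r ≤ n) (hrd : r ≤ d)
    (A E X : Matrix (Fin d) (Fin n) ℝ) (hA : A.rank = r) (hX : X = A + E)
    (Ut : Matrix (Fin d) (Fin r) ℝ) (Vt : Matrix (Fin n) (Fin r) ℝ) (σd : Fin r → ℝ)
    (hUt : Utᵀ * Ut = 1) (hVt : Vtᵀ * Vt = 1)
    (hσpos : ∀ i, 0 < σd i) (hσmono : Antitone σd)
    (hsv1 : X * Vt = Ut * Matrix.diagonal σd)
    (hsv2 : Xᵀ * Ut = Vt * Matrix.diagonal σd)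
    (htop : ∀ i : Fin r, σd i = svalDesc X (Fin.castLE hrn i)) :
    opNorm ((1 - projMat (rowSpace (Ut * Matrix.diagonal σd * Vtᵀ))) *
        projMat (rowSpace A))
      ≤ min (max (opNorm (E * Vt)) (opNorm (Eᵀ * Ut)) / σd ⟨r - 1, by omega⟩) 1 := by
  classical
  set σmin : ℝ := σd ⟨r - 1, by omega⟩ with hσmin
  have hσminpos : 0 < σmin := hσpos _
  have hσle : ∀ i, σmin ≤ σd i := by
    intro i
    apply hσmono
    rw [Fin.le_def]
    simp only []
    omega
  set D' : Matrix (Fin r) (Fin r) ℝ := Matrix.diagonal fun i => (σd i)⁻¹ with hD'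
  have hDD' : Matrix.diagonal σd * D' = 1 := by
    rw [hD', Matrix.diagonal_mul_diagonal]
    have h1 : (fun i => σd i * (σd i)⁻¹) = fun _ => (1:ℝ) :=
      funext fun i => mul_inv_cancel₀ (hσpos i).ne'
    rw [h1, Matrix.diagonal_one]
  set At : Matrix (Fin d) (Fin n) ℝ := Ut * Matrix.diagonal σd * Vtᵀ with hAt
  set V : Submodule ℝ (EuclideanSpace ℝ (Fin n)) := rowSpace At with hV
  set W : Submodule ℝ (EuclideanSpace ℝ (Fin n)) := rowSpace A with hW
  -- characterization of V
  have hAtT : Atᵀ = Vt * (Matrix.diagonal σd * Utᵀ) := by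
    rw [hAt, Matrix.transpose_mul, Matrix.transpose_mul, Matrix.transpose_transpose,
      Matrix.diagonal_transpose]
  have hVtEq : Vt = Atᵀ * (Ut * D') := by
    rw [hAtT, Matrix.mul_assoc]
    have h1 : (Matrix.diagonal σd * Utᵀ) * (Ut * D') = 1 := by
      rw [Matrix.mul_assoc, ← Matrix.mul_assoc Utᵀ, hUt, Matrix.one_mul, hDD']
    rw [h1, Matrix.mul_one]
  have hVrange : V = LinearMap.range (Matrix.toEuclideanLin Vt) := by
    rw [hV, rowSpace_eq_range]
    apply le_antisymm
    · rw [hAtT, toEuclideanLin_mul]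
      exact LinearMap.range_comp_le_range _ _
    · conv_lhs => rw [hVtEq]
      rw [toEuclideanLin_mul]
      exact LinearMap.range_comp_le_range _ _
  -- dimensions
  have hWfin : Module.finrank ℝ W = r := by
    rw [hW, rowSpace_eq_range]
    have h1 : Aᵀ.rank = r := by rw [Matrix.rank_transpose, hA]
    rw [← h1]
    unfold Matrix.rank
    have h : Matrix.toEuclideanLin Aᵀ = ((WithLp.linearEquiv 2 ℝ (Fin n → ℝ)).symm.toLinearMap
        ∘ₗ Aᵀ.mulVecLin) ∘ₗ (WithLp.linearEquiv 2 ℝ (Fin d → ℝ)).toLinearMap := rfl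
    rw [h, LinearMap.range_comp_of_range_eq_top _ (LinearEquiv.range _), LinearMap.range_comp,
      LinearEquiv.finrank_map_eq]
  have hVtinj : Function.Injective (Matrix.toEuclideanLin Vt) := by
    intro a b hab
    have h1 := isometry_of_orthonormal Vt hVt (a - b)
    rw [map_sub, hab, sub_self, norm_zero] at h1
    exact sub_eq_zero.1 (norm_eq_zero.1 h1.symm)
  have hVfin : Module.finrank ℝ V = r := by
    rw [hVrange, LinearMap.finrank_range_of_inj hVtinj]
    simp [finrank_euclideanSpace]
  -- the one-sided residual bound
  have hRU0 : (0:ℝ) ≤ opNorm (Eᵀ * Ut) / σmin := div_nonneg (norm_nonneg _) hσminpos.le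
  have hyp : ∀ y ∈ V, ‖y - (Submodule.orthogonalProjectionOnto W y : EuclideanSpace ℝ (Fin n))‖
      ≤ (opNorm (Eᵀ * Ut) / σmin) * ‖y‖ := by
    intro y hy
    rw [hVrange] at hy
    obtain ⟨u, hu⟩ := hy
    have hVdec : Vt = Aᵀ * (Ut * D') + Eᵀ * Ut * D' := by
      have h2 : Vt * Matrix.diagonal σd = Aᵀ * Ut + Eᵀ * Ut := by
        rw [← hsv2, hX, Matrix.transpose_add, Matrix.add_mul]
      calc Vt = Vt * (Matrix.diagonal σd * D') := by rw [hDD', Matrix.mul_one]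
        _ = (Vt * Matrix.diagonal σd) * D' := by rw [Matrix.mul_assoc]
        _ = (Aᵀ * Ut + Eᵀ * Ut) * D' := by rw [h2]
        _ = Aᵀ * (Ut * D') + Eᵀ * Ut * D' := by rw [Matrix.add_mul, Matrix.mul_assoc]
    set w : EuclideanSpace ℝ (Fin n) :=
      Matrix.toEuclideanLin Aᵀ (Matrix.toEuclideanLin Ut (Matrix.toEuclideanLin D' u)) with hw
    set e : EuclideanSpace ℝ (Fin n) :=
      Matrix.toEuclideanLin (Eᵀ * Ut) (Matrix.toEuclideanLin D' u) with he
    have hye : y = w + e := by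
      rw [← hu]
      conv_lhs => rw [hVdec]
      rw [map_add, LinearMap.add_apply, toEuclideanLin_mul, toEuclideanLin_mul,
        toEuclideanLin_mul, LinearMap.comp_apply, LinearMap.comp_apply, LinearMap.comp_apply]
    have hwW : w ∈ W := by
      rw [hW, rowSpace_eq_range]
      exact ⟨_, rfl⟩
    have hproj : y - (Submodule.orthogonalProjectionOnto W y : EuclideanSpace ℝ (Fin n))
        = e - (Submodule.orthogonalProjectionOnto W e : EuclideanSpace ℝ (Fin n)) := by
      rw [hye, map_add]
      have hcoe : ((Submodule.orthogonalProjectionOnto W w + Submodule.orthogonalProjectionOnto W e : W) :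
          EuclideanSpace ℝ (Fin n))
          = (Submodule.orthogonalProjectionOnto W w : EuclideanSpace ℝ (Fin n))
            + (Submodule.orthogonalProjectionOnto W e : EuclideanSpace ℝ (Fin n)) := rfl
      rw [hcoe, ← Submodule.starProjection_apply W w, Submodule.starProjection_eq_self_iff.2 hwW]
      abel
    rw [hproj]
    calc ‖e - (Submodule.orthogonalProjectionOnto W e : EuclideanSpace ℝ (Fin n))‖ ≤ ‖e‖ :=
        sub_proj_norm_le _ _
      _ ≤ opNorm (Eᵀ * Ut) * ‖Matrix.toEuclideanLin D' u‖ := matvec_norm_le _ _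
      _ ≤ opNorm (Eᵀ * Ut) * (σmin⁻¹ * ‖u‖) := by
          refine mul_le_mul_of_nonneg_left ?_ (norm_nonneg _)
          exact diag_inv_bound σd σmin hσminpos hσle u
      _ = (opNorm (Eᵀ * Ut) / σmin) * ‖y‖ := by
          rw [← hu, isometry_of_orthonormal Vt hVt u]
          ring
  -- assemble
  set R' : ℝ := max (opNorm (E * Vt)) (opNorm (Eᵀ * Ut)) / σmin with hR'
  have hR'0 : 0 ≤ R' := div_nonneg (le_trans (norm_nonneg _) (le_max_left _ _)) hσminpos.le
  have hRUle : opNorm (Eᵀ * Ut) / σmin ≤ R' := by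
    rw [hR']
    exact (div_le_div_iff_of_pos_right hσminpos).2 (le_max_right _ _)
  show opNorm ((1 - projMat V) * projMat W) ≤ min R' 1
  rw [opNorm]
  refine ContinuousLinearMap.opNorm_le_bound _ (le_min hR'0 zero_le_one) ?_
  intro z
  have happ : (Matrix.toEuclideanLin ((1 - projMat V) * projMat W)).toContinuousLinearMap z
      = (Submodule.orthogonalProjectionOnto W z : EuclideanSpace ℝ (Fin n))
        - (Submodule.orthogonalProjectionOnto V (Submodule.orthogonalProjectionOnto W z : EuclideanSpace ℝ (Fin n)) :
            EuclideanSpace ℝ (Fin n)) := by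
    show Matrix.toEuclideanLin ((1 - projMat V) * projMat W) z = _
    rw [toEuclideanLin_mul, LinearMap.comp_apply, projMat_apply, map_sub,
      toEuclideanLin_one, LinearMap.sub_apply, LinearMap.id_apply, projMat_apply]
  rw [happ]
  set x : EuclideanSpace ℝ (Fin n) := (Submodule.orthogonalProjectionOnto W z : EuclideanSpace ℝ (Fin n))
    with hx
  have hxW : x ∈ W := (Submodule.orthogonalProjectionOnto W z).2
  have hxz : ‖x‖ ≤ ‖z‖ := proj_norm_le _ _
  rcases lt_or_ge R' 1 with hlt | hge
  · rw [min_eq_left hlt.le]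
    have key := sin_swap V W (hVfin.trans hWfin.symm) (opNorm (Eᵀ * Ut) / σmin) hRU0
      (lt_of_le_of_lt hRUle hlt) hyp x hxW
    calc ‖x - (Submodule.orthogonalProjectionOnto V x : EuclideanSpace ℝ (Fin n))‖
        ≤ (opNorm (Eᵀ * Ut) / σmin) * ‖x‖ := key
      _ ≤ R' * ‖z‖ := mul_le_mul hRUle hxz (norm_nonneg _) hR'0
  · rw [min_eq_right hge, one_mul]
    exact le_trans (sub_proj_norm_le _ _) hxz
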